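/- Let G be a 2-connected graph with more than 3 vertices and let u be a vertex of degree 2 with neighbors v and w. Then the graph G' obtained by contracting the edge {u,v} satisfies tw(G') = tw(G). -/

import Mathlib

/-- A tree decomposition of a simple graph `G`. -/
structure TreeDecomp {V : Type} (G : SimpleGraph V) where
  ι : Type
  T : SimpleGraph ι
  tree : T.IsTree
  bag : ι → Finset V
  mem_bag : ∀ v : V, ∃ i, v ∈ bag i
  edge_bag : ∀ u v : V, G.Adj u v → ∃ i, u ∈ bag i ∧ v ∈ bag i
  coherent : ∀ v : V, (T.induce {i | v ∈ bag i}).Connected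

/-- The treewidth of a simple graph: the least `w` admitting a tree
decomposition all of whose bags have at most `w + 1` vertices. -/
noncomputable def treewidth {V : Type} (G : SimpleGraph V) : ℕ :=
  sInf {w | ∃ D : TreeDecomp G, ∀ i, (D.bag i).card ≤ w + 1}

/-- Contract the edge `{u, v}` of `G`: the vertex `v` is removed and `u`
absorbs its neighbors. -/
def contractEdge {V : Type} (G : SimpleGraph V) (u v : V) :
    SimpleGraph {x : V // x ≠ v} :=
  SimpleGraph.fromRel (fun a b =>
    G.Adj a b ∨ ((a : V) = u ∧ G.Adj v b) ∨ ((b : V) = u ∧ G.Adj (a : V) v))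

/-- A graph is 2-connected if it is connected, has at least 3 vertices, and
removing any single vertex leaves it connected. -/
def IsTwoConnected {V : Type} (G : SimpleGraph V) : Prop :=
  G.Connected ∧ 3 ≤ Nat.card V ∧ ∀ v : V, (G.induce {x | x ≠ v}).Connected

set_option linter.unusedSectionVars false
namespace TWAux
open SimpleGraph

variable {ι : Type*}

lemma exists_path_support_subset {G : SimpleGraph ι} {S : Set ι} (hS : (G.induce S).Connected)
    {a b : ι} (ha : a ∈ S) (hb : b ∈ S) :
    ∃ p : G.Walk a b, p.IsPath ∧ ∀ x ∈ p.support, x ∈ S := by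
  classical
  obtain ⟨q⟩ := hS ⟨a, ha⟩ ⟨b, hb⟩
  let q' : G.Walk a b := q.map (Embedding.induce S).toHom
  refine ⟨q'.bypass, q'.bypass_isPath, ?_⟩
  intro x hx
  have h2 := q'.support_bypass_subset hx
  rw [show q'.support = _ from Walk.support_map _ _] at h2
  obtain ⟨y, _, rfl⟩ := List.mem_map.1 h2
  exact y.2

lemma tree_path_support_subset {T : SimpleGraph ι} (hT : T.IsTree) {S : Set ι}
    (hS : (T.induce S).Connected) {a b : ι} (ha : a ∈ S) (hb : b ∈ S)
    (p : T.Walk a b) (hp : p.IsPath) : ∀ x ∈ p.support, x ∈ S := by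
  obtain ⟨q, hq, hqS⟩ := exists_path_support_subset hS ha hb
  have : p = q := (hT.existsUnique_path a b).unique hp hq
  subst this
  exact hqS

lemma exists_first_common {G : SimpleGraph ι} {a b : ι} (P : G.Walk a b) :
    ∀ {c : ι} (Q : G.Walk b c), P.IsPath → Q.IsPath →
    ∃ x, ∃ R : G.Walk a c, R.IsPath ∧ x ∈ R.support ∧
      (∀ y ∈ R.support, y ∈ P.support ∨ y ∈ Q.support) ∧ x ∈ P.support ∧ x ∈ Q.support := by
  classical
  induction P with
  | nil =>
    intro c Q _ hQ
    exact ⟨_, Q, hQ, Q.start_mem_support, fun y hy => Or.inr hy, Walk.start_mem_support _,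
      Q.start_mem_support⟩
  | @cons a a' b h P' ih =>
    intro c Q hP hQ
    by_cases haQ : a ∈ Q.support
    · refine ⟨a, Q.dropUntil a haQ, hQ.dropUntil haQ, Walk.start_mem_support _, ?_,
        Walk.start_mem_support _, haQ⟩
      intro y hy
      exact Or.inr (Q.support_dropUntil_subset haQ hy)
    · obtain ⟨x, R', hR', hxR', hsub, hxP', hxQ⟩ := ih Q hP.of_cons hQ
      have haR' : a ∉ R'.support := by
        intro hmem
        rcases hsub a hmem with h1 | h1
        · exact (Walk.cons_isPath_iff h P').1 hP |>.2 h1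
        · exact haQ h1
      refine ⟨x, Walk.cons h R', hR'.cons haR', ?_, ?_, ?_, hxQ⟩
      · simp [Walk.support_cons, hxR']
      · intro y hy
        rw [Walk.support_cons, List.mem_cons] at hy
        rcases hy with rfl | hy
        · exact Or.inl (Walk.start_mem_support _)
        · rcases hsub y hy with h1 | h1
          · exact Or.inl (by simp [Walk.support_cons, h1])
          · exact Or.inr h1
      · simp [Walk.support_cons, hxP']

lemma helly3 {T : SimpleGraph ι} (hT : T.IsTree) {A B C : Set ι}
    (hA : (T.induce A).Connected) (hB : (T.induce B).Connected) (hC : (T.induce C).Connected)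
    (hab : (A ∩ B).Nonempty) (hbc : (B ∩ C).Nonempty) (hac : (A ∩ C).Nonempty) :
    ∃ x, x ∈ A ∧ x ∈ B ∧ x ∈ C := by
  obtain ⟨a, haA, haB⟩ := hab
  obtain ⟨b, hbB, hbC⟩ := hbc
  obtain ⟨c, hcA, hcC⟩ := hac
  obtain ⟨P, hP, hPs⟩ := exists_path_support_subset hB haB hbB
  obtain ⟨Q, hQ, hQs⟩ := exists_path_support_subset hC hbC hcC
  obtain ⟨x, R, hR, hxR, _, hxP, hxQ⟩ := exists_first_common P Q hP hQ
  have hxA : x ∈ A := tree_path_support_subset hT hA haA hcA R hR x hxR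
  exact ⟨x, hxA, hPs x hxP, hQs x hxQ⟩

lemma cyclic_merge {V : Type} [DecidableEq V] {T : SimpleGraph ι} (hT : T.IsTree)
    (bag : ι → Finset V) :
    ∀ (M : List (Set ι × Finset V)) (A : Set ι × Finset V),
      2 ≤ M.length →
      (∀ p ∈ A :: M, (T.induce p.1).Connected) →
      (∀ p ∈ A :: M, ∀ i ∈ p.1, ∃ x ∈ p.2, x ∈ bag i) →
      (A :: M).Pairwise (fun p q => Disjoint p.2 q.2) →
      (A :: M).Chain' (fun p q => (p.1 ∩ q.1).Nonempty) →
      ∀ (hM : M ≠ []), ((M.getLast hM).1 ∩ A.1).Nonempty →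
      ∃ i, 3 ≤ (bag i).card := by
  intro M
  induction M with
  | nil => intro A h; simp at h
  | cons B M' ih =>
    intro A hlen hconn hlab hdisj hchain hM hwrap
    match M' , ih with
    | [], _ => simp at hlen
    | [C], _ =>
      -- base case : three sets A, B, C
      have hAB : (A.1 ∩ B.1).Nonempty := (List.isChain_cons_cons.1 hchain).1
      have hBC : (B.1 ∩ C.1).Nonempty := (List.isChain_cons_cons.1 (List.isChain_cons_cons.1 hchain).2).1
      have hCA : (C.1 ∩ A.1).Nonempty := by simpa using hwrap
      obtain ⟨x, hxA, hxB, hxC⟩ := helly3 hT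
        (hconn A (by simp)) (hconn B (by simp)) (hconn C (by simp))
        hAB hBC ⟨hCA.choose, hCA.choose_spec.2, hCA.choose_spec.1⟩
      obtain ⟨xa, hxa, hxa'⟩ := hlab A (by simp) x hxA
      obtain ⟨xb, hxb, hxb'⟩ := hlab B (by simp) x hxB
      obtain ⟨xc, hxc, hxc'⟩ := hlab C (by simp) x hxC
      have dAB : Disjoint A.2 B.2 := by
        have := List.pairwise_cons.1 hdisj; exact this.1 B (by simp)
      have dAC : Disjoint A.2 C.2 := by
        have := List.pairwise_cons.1 hdisj; exact this.1 C (by simp)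
      have dBC : Disjoint B.2 C.2 := by
        have h1 := (List.pairwise_cons.1 hdisj).2
        exact (List.pairwise_cons.1 h1).1 C (by simp)
      have hne1 : xa ≠ xb := fun h => (Finset.disjoint_left.1 dAB) hxa (h ▸ hxb)
      have hne2 : xa ≠ xc := fun h => (Finset.disjoint_left.1 dAC) hxa (h ▸ hxc)
      have hne3 : xb ≠ xc := fun h => (Finset.disjoint_left.1 dBC) hxb (h ▸ hxc)
      refine ⟨x, ?_⟩
      have hsub : ({xa, xb, xc} : Finset V) ⊆ bag x := by
        intro y hy
        rcases Finset.mem_insert.1 hy with rfl | hy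
        · exact hxa'
        rcases Finset.mem_insert.1 hy with rfl | hy
        · exact hxb'
        · rw [Finset.mem_singleton] at hy; subst hy; exact hxc'
      have hcard : ({xa, xb, xc} : Finset V).card = 3 := by
        rw [Finset.card_insert_of_notMem (by simp [hne1, hne2]),
          Finset.card_insert_of_notMem (by simp [hne3]), Finset.card_singleton]
      calc 3 = ({xa, xb, xc} : Finset V).card := hcard.symm
        _ ≤ (bag x).card := Finset.card_le_card hsub
    | C :: D :: rest, ih =>
      -- merge A and B
      have hAB : (A.1 ∩ B.1).Nonempty := (List.isChain_cons_cons.1 hchain).1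
      set A' : Set ι × Finset V := (A.1 ∪ B.1, A.2 ∪ B.2) with hA'
      have hconnA' : (T.induce A'.1).Connected :=
        induce_union_connected (hconn A (by simp)).preconnected (hconn B (by simp)).preconnected hAB
      apply ih A' (by simp)
      · intro p hp
        rcases List.mem_cons.1 hp with rfl | hp
        · exact hconnA'
        · exact hconn p (by simp [hp])
      · intro p hp i hi
        rcases List.mem_cons.1 hp with rfl | hp
        · rcases hi with hi | hi
          · obtain ⟨x, hx, hx'⟩ := hlab A (by simp) i hi
            exact ⟨x, Finset.mem_union_left _ hx, hx'⟩
          · obtain ⟨x, hx, hx'⟩ := hlab B (by simp) i hi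
            exact ⟨x, Finset.mem_union_right _ hx, hx'⟩
        · exact hlab p (by simp [hp]) i hi
      · -- pairwise disjoint
        have h1 := List.pairwise_cons.1 hdisj
        have h2 := List.pairwise_cons.1 h1.2
        refine List.pairwise_cons.2 ⟨?_, h2.2⟩
        intro q hq
        refine Finset.disjoint_union_left.2 ⟨h1.1 q (by simp [hq]), h2.1 q hq⟩
      · -- chain
        have h1 := (List.isChain_cons_cons.1 hchain).2
        have h2 := List.isChain_cons_cons.1 h1
        refine List.isChain_cons_cons.2 ⟨?_, h2.2⟩
        obtain ⟨y, hy1, hy2⟩ := h2.1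
        exact ⟨y, Or.inr hy1, hy2⟩
      · -- wrap
        have heq : (B :: C :: D :: rest).getLast hM = (C :: D :: rest).getLast (by simp) :=
          List.getLast_cons (by simp)
        rw [heq] at hwrap
        obtain ⟨y, hy1, hy2⟩ := hwrap
        exact ⟨y, hy1, Or.inl hy2⟩

lemma bag_three_of_cycle {W : Type} [DecidableEq W] {H : SimpleGraph W} (D : TreeDecomp H)
    {x : W} (c : H.Walk x x) (hc : c.IsCycle) : ∃ i, 3 ≤ (D.bag i).card := by
  classical
  set t := c.support.tail with ht
  have hlen : t.length = c.length := by
    rw [ht, List.length_tail, Walk.length_support]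
    omega
  have ht3 : 3 ≤ t.length := hlen ▸ hc.three_le_length
  have hsupp : c.support = x :: t := Walk.support_eq_cons c
  set f : W → Set D.ι × Finset W := fun y => ({i | y ∈ D.bag i}, ({y} : Finset W)) with hf
  have hchainAdj : t.Chain' H.Adj := (hsupp ▸ c.isChain_adj_support).tail
  match htt : t, ht3 with
  | y1 :: t', _ =>
  have ht' : 2 ≤ t'.length := by
    have := ht3; rw [htt] at this; simpa using this
  have htne : t' ≠ [] := by
    intro h; rw [h] at ht'; simp at ht'
  apply cyclic_merge D.tree D.bag (t'.map f) (f y1)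
  · simpa using ht'
  · intro p hp
    have : p ∈ (y1 :: t').map f := by simpa using hp
    obtain ⟨y, _, rfl⟩ := List.mem_map.1 this
    exact D.coherent y
  · intro p hp i hi
    have : p ∈ (y1 :: t').map f := by simpa using hp
    obtain ⟨y, _, rfl⟩ := List.mem_map.1 this
    exact ⟨y, Finset.mem_singleton_self y, hi⟩
  · have hnd : (y1 :: t').Nodup := htt ▸ hc.support_nodup
    have hpw : (y1 :: t').Pairwise (fun a b => a ≠ b) := hnd
    have hmap : ((y1 :: t').map f).Pairwise (fun p q => Disjoint p.2 q.2) :=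
      hpw.map f (fun a b hab => by
        show Disjoint (f a).2 (f b).2
        exact Finset.disjoint_singleton.2 hab)
    simpa using hmap
  · have hch : (y1 :: t').Chain' H.Adj := htt ▸ hchainAdj
    have hchm : ((y1 :: t').map f).Chain' (fun p q => (p.1 ∩ q.1).Nonempty) :=
      List.isChain_map_of_isChain f (fun a b hab => by
        show ((f a).1 ∩ (f b).1).Nonempty
        obtain ⟨i, hi1, hi2⟩ := D.edge_bag a b hab
        exact ⟨i, hi1, hi2⟩) hch
    simpa using hchm
  · -- wrap
    have h2 : (y1 :: t').getLast? = some x := by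
      have h1 : c.support.getLast? = some (c.support.getLast (by simp)) :=
        List.getLast?_eq_getLast _
      rw [Walk.getLast_support] at h1
      rw [hsupp] at h1
      rwa [List.getLast?_cons_cons] at h1
    have h3 : t'.getLast? = some x := by
      cases t' with
      | nil => exact absurd rfl htne
      | cons z t'' => rwa [List.getLast?_cons_cons] at h2
    have hlast : (t'.map f).getLast (by simpa using htne) = f x := by
      rw [List.getLast_map]
      have h4 := (List.getLast?_eq_getLast htne).symm.trans h3
      exact congrArg f (Option.some.inj h4)
    rw [hlast]
    have hadj : H.Adj x y1 := by
      have := hsupp ▸ c.isChain_adj_support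
      exact (List.isChain_cons_cons.1 this).1
    obtain ⟨i, hi1, hi2⟩ := D.edge_bag x y1 hadj
    exact ⟨i, hi1, hi2⟩


/-- The trivial tree decomposition with a single bag. -/
noncomputable def trivialDecomp {W : Type} [Fintype W] [Nonempty W] (H : SimpleGraph W) :
    TreeDecomp H where
  ι := Unit
  T := ⊥
  tree := ⟨by rw [connected_iff]; exact ⟨preconnected_bot, ⟨()⟩⟩, isAcyclic_bot⟩
  bag := fun _ => Finset.univ
  mem_bag := fun x => ⟨(), Finset.mem_univ x⟩
  edge_bag := fun x y _ => ⟨(), Finset.mem_univ x, Finset.mem_univ y⟩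
  coherent := fun x => by
    rw [connected_iff]
    exact ⟨fun a b => by rw [Subsingleton.elim a b], ⟨⟨(), by simp⟩⟩⟩

lemma treewidth_set_nonempty {W : Type} [Fintype W] [Nonempty W] (H : SimpleGraph W) :
    {n | ∃ D : TreeDecomp H, ∀ i, (D.bag i).card ≤ n + 1}.Nonempty :=
  ⟨Fintype.card W, trivialDecomp H, fun _ => by
    show Finset.univ.card ≤ _
    rw [Finset.card_univ]
    exact Nat.le_succ _⟩

section Main

variable {V : Type} [Fintype V] [DecidableEq V]
variable {G : SimpleGraph V} {u v w : V}

/-- The collapsing map sending `u` to `v`. -/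
def collapse (hvu : v ≠ u) : V → {x : V // x ≠ u} :=
  fun x => if h : x = u then ⟨v, hvu⟩ else ⟨x, h⟩

lemma collapse_ne (hvu : v ≠ u) {x : V} (hx : x ≠ u) : collapse hvu x = ⟨x, hx⟩ := dif_neg hx

lemma collapse_u (hvu : v ≠ u) : collapse hvu u = ⟨v, hvu⟩ := dif_pos rfl

lemma collapse_coe (hvu : v ≠ u) (p : {x : V // x ≠ u}) : collapse hvu (p : V) = p := by
  rw [collapse_ne hvu p.2]

lemma adj_uv (hnbr : G.neighborSet u = {v, w}) : G.Adj u v := by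
  have : v ∈ G.neighborSet u := by rw [hnbr]; left; rfl
  exact this

lemma adj_uw (hnbr : G.neighborSet u = {v, w}) : G.Adj u w := by
  have : w ∈ G.neighborSet u := by rw [hnbr]; right; rfl
  exact this

lemma contract_adj_of_adj {a b : {x : V // x ≠ u}} (hab : G.Adj a b) :
    (contractEdge G v u).Adj a b := by
  rw [contractEdge, fromRel_adj]
  exact ⟨fun h => hab.ne (congrArg Subtype.val h), Or.inl (Or.inl hab)⟩

lemma contract_adj_v_of_adj_u (hvu : v ≠ u) {b : {x : V // x ≠ u}} (hbv : (b : V) ≠ v)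
    (hb : G.Adj u b) : (contractEdge G v u).Adj ⟨v, hvu⟩ b := by
  rw [contractEdge, fromRel_adj]
  refine ⟨fun h => hbv (congrArg Subtype.val h).symm, Or.inl (Or.inr (Or.inl ⟨rfl, hb⟩))⟩

/-- Direction 1: from a decomposition of `G`, one of the contraction. -/
noncomputable def contractDecomp (hvu : v ≠ u) (hadj : G.Adj u v) (D : TreeDecomp G) :
    TreeDecomp (contractEdge G v u) where
  ι := D.ι
  T := D.T
  tree := D.tree
  bag := fun i => (D.bag i).image (collapse hvu)
  mem_bag := fun x => by
    obtain ⟨i, hi⟩ := D.mem_bag x.val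
    refine ⟨i, ?_⟩
    exact (collapse_coe hvu x) ▸ Finset.mem_image_of_mem _ hi
  edge_bag := fun a b hab => by
    rw [contractEdge, fromRel_adj] at hab
    obtain ⟨hne, hrel⟩ := hab
    have key : ∀ (p q : {x : V // x ≠ u}),
        (G.Adj p q ∨ ((p : V) = v ∧ G.Adj u q) ∨ ((q : V) = v ∧ G.Adj (p : V) u)) →
        ∃ i, p ∈ (D.bag i).image (collapse hvu) ∧ q ∈ (D.bag i).image (collapse hvu) := by
      rintro p q (h | ⟨hp, h⟩ | ⟨hq, h⟩)
      · obtain ⟨i, h1, h2⟩ := D.edge_bag _ _ h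
        refine ⟨i, ?_, ?_⟩
        · exact (collapse_coe hvu p) ▸ Finset.mem_image_of_mem _ h1
        · exact (collapse_coe hvu q) ▸ Finset.mem_image_of_mem _ h2
      · obtain ⟨i, h1, h2⟩ := D.edge_bag _ _ h
        refine ⟨i, ?_, ?_⟩
        · have : collapse hvu u = p := by
            rw [collapse_u hvu]; exact Subtype.ext hp.symm
          exact this ▸ Finset.mem_image_of_mem _ h1
        · exact (collapse_coe hvu q) ▸ Finset.mem_image_of_mem _ h2
      · obtain ⟨i, h1, h2⟩ := D.edge_bag _ _ h
        refine ⟨i, ?_, ?_⟩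
        · exact (collapse_coe hvu p) ▸ Finset.mem_image_of_mem _ h1
        · have : collapse hvu u = q := by
            rw [collapse_u hvu]; exact Subtype.ext hq.symm
          exact this ▸ Finset.mem_image_of_mem _ h2
    rcases hrel with h | h
    · exact key a b h
    · obtain ⟨i, h1, h2⟩ := key b a h
      exact ⟨i, h2, h1⟩
  coherent := fun x => by
    by_cases hxv : (x : V) = v
    · have hx : x = ⟨v, hvu⟩ := Subtype.ext hxv
      subst hx
      have hSeq : {i | (⟨v, hvu⟩ : {x : V // x ≠ u}) ∈ (D.bag i).image (collapse hvu)} =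
          {i | v ∈ D.bag i} ∪ {i | u ∈ D.bag i} := by
        ext i
        simp only [Set.mem_setOf_eq, Finset.mem_image, Set.mem_union]
        constructor
        · rintro ⟨y, hy, hcy⟩
          by_cases hyu : y = u
          · subst hyu; right; exact hy
          · left
            rw [collapse_ne hvu hyu] at hcy
            have : y = v := congrArg Subtype.val hcy
            exact this ▸ hy
        · rintro (h | h)
          · exact ⟨v, h, collapse_ne hvu hvu⟩
          · exact ⟨u, h, collapse_u hvu⟩
      rw [hSeq]
      refine induce_union_connected (D.coherent v).preconnected (D.coherent u).preconnected ?_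
      obtain ⟨i, h1, h2⟩ := D.edge_bag u v hadj
      exact ⟨i, h2, h1⟩
    · have hSeq : {i | x ∈ (D.bag i).image (collapse hvu)} = {i | (x : V) ∈ D.bag i} := by
        ext i
        simp only [Set.mem_setOf_eq, Finset.mem_image]
        constructor
        · rintro ⟨y, hy, hcy⟩
          by_cases hyu : y = u
          · subst hyu
            rw [collapse_u hvu] at hcy
            exact absurd (congrArg Subtype.val hcy).symm hxv
          · rw [collapse_ne hvu hyu] at hcy
            have : y = (x : V) := congrArg Subtype.val hcy
            exact this ▸ hy
        · intro h
          exact ⟨(x : V), h, collapse_coe hvu x⟩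
      rw [hSeq]
      exact D.coherent (x : V)

end Main
section Extend

variable {V : Type} [Fintype V] [DecidableEq V]
variable {G : SimpleGraph V} {u v w : V}
variable {ι' : Type} {T' : SimpleGraph ι'} (i0 : ι')

/-- The tree `T'` extended by a pendant vertex `none` attached at `i0`. -/
def extendTree : SimpleGraph (Option ι') :=
  SimpleGraph.fromRel (fun x y =>
    (∃ i j, x = some i ∧ y = some j ∧ T'.Adj i j) ∨ (x = none ∧ y = some i0))

lemma extendTree_adj_some {i j : ι'} :
    (extendTree (T' := T') i0).Adj (some i) (some j) ↔ T'.Adj i j := by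
  rw [extendTree, fromRel_adj]
  constructor
  · rintro ⟨hne, (⟨i', j', hi, hj, h⟩ | ⟨hx, _⟩) | (⟨i', j', hi, hj, h⟩ | ⟨hy, _⟩)⟩
    · cases hi; cases hj; exact h
    · exact absurd hx (by simp)
    · cases hi; cases hj; exact h.symm
    · exact absurd hy (by simp)
  · intro h
    exact ⟨by simpa using h.ne, Or.inl (Or.inl ⟨i, j, rfl, rfl, h⟩)⟩

lemma extendTree_adj_none {y : Option ι'} :
    (extendTree (T' := T') i0).Adj none y ↔ y = some i0 := by
  rw [extendTree, fromRel_adj]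
  constructor
  · rintro ⟨hne, (⟨i', j', hi, _, _⟩ | ⟨_, hy⟩) | (⟨i', j', _, hj, _⟩ | habs)⟩
    · exact absurd hi (by simp)
    · exact hy
    · exact absurd hj (by simp)
    · exact absurd habs.2 (by simp)
  · rintro rfl
    exact ⟨by simp, Or.inl (Or.inr ⟨rfl, rfl⟩)⟩

/-- Embedding `T'` into the extended tree as a graph hom. -/
def extendHom : T' →g extendTree (T' := T') i0 where
  toFun := some
  map_rel' := fun h => (extendTree_adj_some i0).2 h

lemma lift_walk {x y : Option ι'} (p : (extendTree (T' := T') i0).Walk x y) :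
    (∀ z ∈ p.support, z ≠ none) → ∀ (i j : ι'), x = some i → y = some j →
    ∃ q : T'.Walk i j, q.support.map some = p.support ∧
      q.edges.map (Sym2.map some) = p.edges := by
  induction p with
  | nil =>
    rintro _ i j rfl hy
    cases hy
    exact ⟨Walk.nil, by simp, by simp⟩
  | @cons x z y h p' ih =>
    rintro hnn i j rfl rfl
    have hz : z ≠ none := hnn z (by simp [Walk.support_cons])
    obtain ⟨k, rfl⟩ := Option.ne_none_iff_exists'.1 hz
    have hadj : T'.Adj i k := (extendTree_adj_some i0).1 h
    obtain ⟨q, hq1, hq2⟩ := ih (fun z hz' => hnn z (by simp [Walk.support_cons, hz'])) k j rfl rfl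
    exact ⟨Walk.cons hadj q, by simp [Walk.support_cons, hq1], by simp [Walk.edges_cons, hq2]⟩

lemma extendTree_isTree (hT' : T'.IsTree) : (extendTree (T' := T') i0).IsTree := by
  constructor
  · -- connected
    rw [connected_iff]
    refine ⟨?_, ⟨none⟩⟩
    have hreach : ∀ x : Option ι', (extendTree (T' := T') i0).Reachable x none := by
      intro x
      cases x with
      | none => exact Reachable.refl none
      | some i =>
        have h1 : (extendTree (T' := T') i0).Reachable (some i) (some i0) :=
          Reachable.map (extendHom i0) (hT'.isConnected.preconnected i i0)
        exact h1.trans (Adj.reachable (((extendTree_adj_none i0).2 rfl).symm))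
    intro x y
    exact (hreach x).trans (hreach y).symm
  · -- acyclic
    intro x c hc
    classical
    by_cases hnone : none ∈ c.support
    · set c' := c.rotate none hnone with hc'
      have hcyc : c'.IsCycle := hc.rotate hnone
      have hne : c' ≠ Walk.nil := hcyc.ne_nil
      cases hc'' : c' with
      | nil => exact hne hc''
      | @cons _ z _ h p =>
        have hz : z = some i0 := (extendTree_adj_none i0).1 h
        subst hz
        have hpne : (some i0 : Option ι') ≠ none := by simp
        obtain ⟨z2, h2, q, hq⟩ := Walk.exists_eq_cons_of_ne (by simp : (none : Option ι') ≠ some i0) p.reverse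
        have hz2 : z2 = some i0 := (extendTree_adj_none i0).1 h2
        subst hz2
        -- edge none-(some i0) is both the first edge of c' and in p.edges
        have hmem : s(none, some i0) ∈ p.edges := by
          have : s(none, some i0) ∈ p.reverse.edges := by
            rw [hq, Walk.edges_cons]
            exact List.mem_cons_self
          rwa [Walk.edges_reverse, List.mem_reverse] at this
        have htrail := hcyc.isTrail
        rw [hc''] at htrail
        rw [Walk.isTrail_def, Walk.edges_cons] at htrail
        exact (List.nodup_cons.1 htrail).1 hmem
    · -- cycle avoids none: lift to T'
      have hx : x ≠ none := fun h => hnone (h ▸ c.start_mem_support)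
      obtain ⟨i, rfl⟩ := Option.ne_none_iff_exists'.1 hx
      obtain ⟨q, hq1, hq2⟩ := lift_walk i0 c (fun z hz => fun h => hnone (h ▸ hz)) i i rfl rfl
      have hqcyc : q.IsCycle := by
        rw [Walk.isCycle_def]
        refine ⟨?_, ?_, ?_⟩
        · rw [Walk.isTrail_def]
          have := hc.isTrail.edges_nodup
          rw [← hq2] at this
          exact this.of_map _
        · intro h
          have h3 := hc.three_le_length
          have e1 : q.support.length = c.support.length := by rw [← hq1, List.length_map]
          rw [h] at e1
          have e2 : (1 : ℕ) = c.length + 1 := by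
            simpa [Walk.length_support] using e1
          omega
        · have := hc.support_nodup
          rw [← hq1, ← List.map_tail] at this
          exact this.of_map _
      exact hT'.2 q hqcyc

end Extend

section Extend2
variable {ι' : Type} {T' : SimpleGraph ι'} (i0 : ι')

lemma singleton_induce_connected {κ : Type} (H : SimpleGraph κ) (a : κ) :
    (H.induce {a}).Connected := by
  rw [connected_iff]
  refine ⟨fun x y => ?_, ⟨⟨a, rfl⟩⟩⟩
  have : x = y := Subtype.ext (x.2.trans y.2.symm)
  rw [this]

/-- The canonical hom between induced subgraphs. -/
def extendInduceHom (S : Set ι') :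
    T'.induce S →g (extendTree (T' := T') i0).induce (some '' S) where
  toFun := fun p => ⟨some p.val, ⟨p.val, p.2, rfl⟩⟩
  map_rel' := fun hab => (extendTree_adj_some i0).2 hab

/-- Transfer connectivity through `some`. -/
lemma some_image_connected {S : Set ι'} (hS : (T'.induce S).Connected) :
    ((extendTree (T' := T') i0).induce (some '' S)).Connected := by
  rw [connected_iff]
  constructor
  · rintro ⟨x, hx⟩ ⟨y, hy⟩
    obtain ⟨i, hiS, rfl⟩ := hx
    obtain ⟨j, hjS, rfl⟩ := hy
    exact Reachable.map (extendInduceHom i0 S) (hS.preconnected ⟨i, hiS⟩ ⟨j, hjS⟩)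
  · obtain ⟨i⟩ := hS.nonempty
    exact ⟨⟨some i.val, ⟨i.val, i.2, rfl⟩⟩⟩

end Extend2

section Extend3
variable {V : Type} [Fintype V] [DecidableEq V]
variable {G : SimpleGraph V} {u v w : V}

noncomputable def extendDecomp (D' : TreeDecomp (contractEdge G v u)) (hvu : v ≠ u) (hwu : w ≠ u)
    (hnbr : G.neighborSet u = {v, w}) (i0 : D'.ι)
    (hvi0 : (⟨v, hvu⟩ : {x : V // x ≠ u}) ∈ D'.bag i0)
    (hwi0 : (⟨w, hwu⟩ : {x : V // x ≠ u}) ∈ D'.bag i0) :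
    TreeDecomp G where
  ι := Option D'.ι
  T := extendTree (T' := D'.T) i0
  tree := extendTree_isTree i0 D'.tree
  bag := fun o => o.elim {u, v, w} (fun i => (D'.bag i).image Subtype.val)
  mem_bag := fun x => by
    by_cases hx : x = u
    · exact ⟨none, by simp [hx]⟩
    · obtain ⟨i, hi⟩ := D'.mem_bag ⟨x, hx⟩
      exact ⟨some i, by
        show x ∈ (D'.bag i).image Subtype.val
        exact Finset.mem_image.2 ⟨⟨x, hx⟩, hi, rfl⟩⟩
  edge_bag := fun a b hab => by
    by_cases hau : a = u
    · subst hau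
      have hb : b ∈ G.neighborSet a := hab
      rw [hnbr] at hb
      refine ⟨none, by simp, ?_⟩
      rcases hb with rfl | rfl
      · show b ∈ ({a, b, w} : Finset V); simp
      · show b ∈ ({a, v, b} : Finset V); simp
    · by_cases hbu : b = u
      · subst hbu
        have ha : a ∈ G.neighborSet b := hab.symm
        rw [hnbr] at ha
        refine ⟨none, ?_, by simp⟩
        rcases ha with rfl | rfl
        · show a ∈ ({b, a, w} : Finset V); simp
        · show a ∈ ({b, v, a} : Finset V); simp
      · have hadj' : (contractEdge G v u).Adj ⟨a, hau⟩ ⟨b, hbu⟩ := contract_adj_of_adj hab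
        obtain ⟨i, h1, h2⟩ := D'.edge_bag _ _ hadj'
        exact ⟨some i, Finset.mem_image.2 ⟨_, h1, rfl⟩, Finset.mem_image.2 ⟨_, h2, rfl⟩⟩
  coherent := fun x => by
    by_cases hxu : x = u
    · subst hxu
      have hSeq : {o : Option D'.ι | x ∈ o.elim ({x, v, w} : Finset V)
          (fun i => (D'.bag i).image Subtype.val)} = {none} := by
        ext o
        cases o with
        | none => simp
        | some i =>
          simp only [Option.elim, Set.mem_setOf_eq, Set.mem_singleton_iff]
          constructor
          · intro h
            obtain ⟨y, _, hy⟩ := Finset.mem_image.1 h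
            exact absurd hy y.2
          · intro h; cases h
      rw [hSeq]
      exact singleton_induce_connected _ none
    · by_cases hxv : x = v
      · subst hxv
        have hSeq : {o : Option D'.ι | x ∈ o.elim ({u, x, w} : Finset V)
            (fun i => (D'.bag i).image Subtype.val)} =
            {none} ∪ some '' {i | (⟨x, hxu⟩ : {y : V // y ≠ u}) ∈ D'.bag i} := by
          ext o
          cases o with
          | none => simp
          | some i =>
            simp only [Option.elim, Set.mem_setOf_eq, Set.mem_union, Set.mem_singleton_iff,
              Set.mem_image]
            constructor
            · intro h
              obtain ⟨y, hy, hyv⟩ := Finset.mem_image.1 h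
              right
              refine ⟨i, ?_, rfl⟩
              show (⟨x, hxu⟩ : {y : V // y ≠ u}) ∈ D'.bag i
              rwa [show (⟨x, hxu⟩ : {y : V // y ≠ u}) = y from Subtype.ext hyv.symm]
            · rintro (h | ⟨j, hj, hji⟩)
              · exact absurd h (by simp)
              · have : j = i := Option.some.inj hji
                subst this
                exact Finset.mem_image.2 ⟨⟨x, hxu⟩, hj, rfl⟩
        rw [hSeq]
        exact connected_induce_union (singleton_induce_connected _ none).preconnected
          (some_image_connected i0 (D'.coherent ⟨x, hxu⟩)).preconnected rfl ⟨i0, hvi0, rfl⟩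
          ((extendTree_adj_none i0).2 rfl)
      · by_cases hxw : x = w
        · subst hxw
          have hSeq : {o : Option D'.ι | x ∈ o.elim ({u, v, x} : Finset V)
              (fun i => (D'.bag i).image Subtype.val)} =
              {none} ∪ some '' {i | (⟨x, hxu⟩ : {y : V // y ≠ u}) ∈ D'.bag i} := by
            ext o
            cases o with
            | none => simp
            | some i =>
              simp only [Option.elim, Set.mem_setOf_eq, Set.mem_union, Set.mem_singleton_iff,
                Set.mem_image]
              constructor
              · intro h
                obtain ⟨y, hy, hyv⟩ := Finset.mem_image.1 h
                right
                refine ⟨i, ?_, rfl⟩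
                show (⟨x, hxu⟩ : {y : V // y ≠ u}) ∈ D'.bag i
                rwa [show (⟨x, hxu⟩ : {y : V // y ≠ u}) = y from Subtype.ext hyv.symm]
              · rintro (h | ⟨j, hj, hji⟩)
                · exact absurd h (by simp)
                · have : j = i := Option.some.inj hji
                  subst this
                  exact Finset.mem_image.2 ⟨⟨x, hxu⟩, hj, rfl⟩
          rw [hSeq]
          exact connected_induce_union (singleton_induce_connected _ none).preconnected
            (some_image_connected i0 (D'.coherent ⟨x, hxu⟩)).preconnected rfl ⟨i0, hwi0, rfl⟩
            ((extendTree_adj_none i0).2 rfl)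
        · have hSeq : {o : Option D'.ι | x ∈ o.elim ({u, v, w} : Finset V)
              (fun i => (D'.bag i).image Subtype.val)} =
              some '' {i | (⟨x, hxu⟩ : {y : V // y ≠ u}) ∈ D'.bag i} := by
            ext o
            cases o with
            | none =>
              simp only [Option.elim, Set.mem_setOf_eq, Set.mem_image]
              constructor
              · intro h
                rcases Finset.mem_insert.1 h with h | h
                · exact absurd h hxu
                rcases Finset.mem_insert.1 h with h | h
                · exact absurd h hxv
                · rw [Finset.mem_singleton] at h; exact absurd h hxw
              · rintro ⟨j, _, hj⟩
                exact absurd hj (by simp)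
            | some i =>
              simp only [Option.elim, Set.mem_setOf_eq, Set.mem_image]
              constructor
              · intro h
                obtain ⟨y, hy, hyv⟩ := Finset.mem_image.1 h
                refine ⟨i, ?_, rfl⟩
                show (⟨x, hxu⟩ : {y : V // y ≠ u}) ∈ D'.bag i
                rwa [show (⟨x, hxu⟩ : {y : V // y ≠ u}) = y from Subtype.ext hyv.symm]
              · rintro ⟨j, hj, hji⟩
                have : j = i := Option.some.inj hji
                subst this
                exact Finset.mem_image.2 ⟨⟨x, hxu⟩, hj, rfl⟩
          rw [hSeq]
          exact some_image_connected i0 (D'.coherent ⟨x, hxu⟩)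

end Extend3

section Deg

lemma exists_adj_of_connected {κ : Type} {H : SimpleGraph κ} (hconn : H.Connected) {a b : κ}
    (hab : a ≠ b) : ∃ c, H.Adj a c := by
  obtain ⟨p⟩ := hconn.preconnected a b
  obtain ⟨c, h, _, _⟩ := Walk.exists_eq_cons_of_ne hab p
  exact ⟨c, h⟩

lemma confine_walk {κ : Type} {H : SimpleGraph κ} {S : Set κ}
    (hclosed : ∀ s ∈ S, ∀ t, H.Adj s t → t ∈ S) :
    ∀ {a b : κ}, H.Walk a b → a ∈ S → b ∈ S := by
  intro a b p
  induction p with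
  | nil => exact fun ha => ha
  | cons h q ih => exact fun ha => ih (hclosed _ ha _ h)

lemma confine {κ : Type} {H : SimpleGraph κ} {S : Set κ}
    (hclosed : ∀ s ∈ S, ∀ t, H.Adj s t → t ∈ S) :
    ∀ {a b : κ}, H.Reachable a b → a ∈ S → b ∈ S := by
  intro a b hr ha
  obtain ⟨p⟩ := hr
  exact confine_walk hclosed p ha

lemma not_isAcyclic {κ : Type} [Fintype κ] {H : SimpleGraph κ} (hconn : H.Connected)
    (hdeg : ∀ x : κ, ∃ a b, a ≠ b ∧ H.Adj x a ∧ H.Adj x b) : ¬H.IsAcyclic := by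
  classical
  intro hacyc
  have htree : H.IsTree := ⟨hconn, hacyc⟩
  have hcard := htree.card_edgeFinset
  have hdeg2 : ∀ x : κ, 2 ≤ H.degree x := by
    intro x
    obtain ⟨a, b, hab, ha, hb⟩ := hdeg x
    have : 1 < (H.neighborFinset x).card := by
      rw [Finset.one_lt_card]
      exact ⟨a, by rwa [mem_neighborFinset], b, by rwa [mem_neighborFinset], hab⟩
    rwa [degree]
  have hsum := H.sum_degrees_eq_twice_card_edges
  have h1 : 2 * Fintype.card κ ≤ ∑ x : κ, H.degree x := by
    calc 2 * Fintype.card κ = ∑ _x : κ, 2 := by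
          rw [Finset.sum_const, Finset.card_univ, smul_eq_mul, mul_comm]
      _ ≤ ∑ x : κ, H.degree x := Finset.sum_le_sum (fun x _ => hdeg2 x)
  omega

end Deg

section Main2
variable {V : Type} [Fintype V] [DecidableEq V]
variable {G : SimpleGraph V} {u v w : V}

lemma contract_adj_collapse (hvu : v ≠ u) {a b : V} (hab : G.Adj a b)
    (hne : collapse hvu a ≠ collapse hvu b) :
    (contractEdge G v u).Adj (collapse hvu a) (collapse hvu b) := by
  by_cases hau : a = u
  · have hbu : b ≠ u := fun h => hab.ne (hau.trans h.symm)
    rw [hau, collapse_u hvu, collapse_ne hvu hbu]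
    have hbv : b ≠ v := by
      intro h
      apply hne
      rw [hau, collapse_u hvu, collapse_ne hvu hbu]
      exact Subtype.ext h.symm
    refine contract_adj_v_of_adj_u hvu hbv ?_
    show G.Adj u b
    rw [← hau]; exact hab
  · by_cases hbu : b = u
    · rw [hbu, collapse_u hvu, collapse_ne hvu hau]
      have hav : a ≠ v := by
        intro h
        apply hne
        rw [hbu, collapse_u hvu, collapse_ne hvu hau]
        exact Subtype.ext h
      refine (contract_adj_v_of_adj_u hvu hav ?_).symm
      show G.Adj u a
      rw [← hbu]; exact hab.symm
    · rw [collapse_ne hvu hau, collapse_ne hvu hbu]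
      exact contract_adj_of_adj hab

lemma contract_connected (hvu : v ≠ u) (hconn : G.Connected) :
    (contractEdge G v u).Connected := by
  rw [connected_iff]
  refine ⟨?_, ⟨⟨v, hvu⟩⟩⟩
  have key : ∀ a b : V, G.Reachable a b →
      (contractEdge G v u).Reachable (collapse hvu a) (collapse hvu b) := by
    intro a b hr
    obtain ⟨p⟩ := hr
    induction p with
    | nil => exact Reachable.refl _
    | @cons a z b h q ih =>
      refine Reachable.trans ?_ ih
      by_cases hee : collapse hvu a = collapse hvu z
      · rw [hee]
      · exact (contract_adj_collapse hvu h hee).reachable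
  intro x y
  have hx := collapse_coe hvu x
  have hy := collapse_coe hvu y
  rw [← hx, ← hy]
  exact key _ _ (hconn.preconnected _ _)

lemma exists_ne_three (hcard : 3 < Fintype.card V) (a b c : V) :
    ∃ z : V, z ≠ a ∧ z ≠ b ∧ z ≠ c := by
  by_contra h
  push_neg at h
  have hsub : (Finset.univ : Finset V) ⊆ {a, b, c} := by
    intro t _
    by_cases h1 : t = a
    · simp [h1]
    by_cases h2 : t = b
    · simp [h2]
    have := h t h1 h2
    simp [this]
  have hle := Finset.card_le_card hsub
  rw [Finset.card_univ] at hle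
  have : ({a, b, c} : Finset V).card ≤ 3 :=
    le_trans (Finset.card_insert_le _ _) (by
      have := Finset.card_insert_le b ({c} : Finset V)
      simp only [Finset.card_singleton] at this ⊢
      omega)
  omega

lemma min_degree_two (hconn : G.Connected)
    (hrem : ∀ y : V, (G.induce {x | x ≠ y}).Connected) (hcard3 : 3 ≤ Fintype.card V) :
    ∀ x : V, ∃ y z, y ≠ z ∧ G.Adj x y ∧ G.Adj x z := by
  intro x
  obtain ⟨z0, hz0⟩ := Fintype.exists_ne_of_one_lt_card (by omega) x
  obtain ⟨y, hy⟩ := exists_adj_of_connected hconn (fun h => hz0 h.symm)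
  have hxy : x ≠ y := hy.ne
  have hz1 : ∃ z1 : V, z1 ≠ x ∧ z1 ≠ y := by
    by_contra h
    push_neg at h
    have hsub : (Finset.univ : Finset V) ⊆ {x, y} := by
      intro t _
      by_cases h1 : t = x
      · simp [h1]
      · simp [h t h1]
    have hle := Finset.card_le_card hsub
    rw [Finset.card_univ] at hle
    have : ({x, y} : Finset V).card ≤ 2 :=
      le_trans (Finset.card_insert_le _ _) (by simp)
    omega
  obtain ⟨z1, hz1x, hz1y⟩ := hz1
  have hne : (⟨x, hxy⟩ : {t : V // t ≠ y}) ≠ ⟨z1, hz1y⟩ :=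
    fun h => hz1x (congrArg Subtype.val h).symm
  obtain ⟨c, hc⟩ := exists_adj_of_connected (hrem y) hne
  refine ⟨y, (c : V), fun h => c.2 h.symm, hy, hc⟩

lemma nbhd_v_not_subset (hcard : 3 < Fintype.card V)
    (hrem : ∀ y : V, (G.induce {x | x ≠ y}).Connected)
    (hnbr : G.neighborSet u = {v, w}) (hadj_uv : G.Adj u v) (hadj_uw : G.Adj u w)
    (hNv : G.neighborSet v ⊆ {u, w}) : False := by
  obtain ⟨z0, hz0u, hz0v, hz0w⟩ := exists_ne_three hcard u v w
  have huw : u ≠ w := hadj_uw.ne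
  have hclosed : ∀ s ∈ {p : {x : V // x ≠ w} | (p : V) = u ∨ (p : V) = v},
      ∀ t : {x : V // x ≠ w}, (G.induce {x | x ≠ w}).Adj s t →
      t ∈ {p : {x : V // x ≠ w} | (p : V) = u ∨ (p : V) = v} := by
    rintro s (hs | hs) t hadj
    · have : (t : V) ∈ G.neighborSet u := by rw [← hs]; exact hadj
      rw [hnbr] at this
      rcases this with h | h
      · exact Or.inr h
      · exact absurd h t.2
    · have : (t : V) ∈ G.neighborSet v := by rw [← hs]; exact hadj
      rcases hNv this with h | h
      · exact Or.inl h
      · exact absurd h t.2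
  have hreach := (hrem w).preconnected ⟨u, huw⟩ ⟨z0, hz0w⟩
  have := confine hclosed hreach (Or.inl rfl)
  rcases this with h | h
  · exact hz0u h
  · exact hz0v h

lemma nbhd_w_not_subset (hcard : 3 < Fintype.card V)
    (hrem : ∀ y : V, (G.induce {x | x ≠ y}).Connected)
    (hnbr : G.neighborSet u = {v, w}) (hadj_uv : G.Adj u v) (hadj_uw : G.Adj u w)
    (hNw : G.neighborSet w ⊆ {u, v}) : False := by
  obtain ⟨z0, hz0u, hz0v, hz0w⟩ := exists_ne_three hcard u v w
  have huv : u ≠ v := hadj_uv.ne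
  have hclosed : ∀ s ∈ {p : {x : V // x ≠ v} | (p : V) = u ∨ (p : V) = w},
      ∀ t : {x : V // x ≠ v}, (G.induce {x | x ≠ v}).Adj s t →
      t ∈ {p : {x : V // x ≠ v} | (p : V) = u ∨ (p : V) = w} := by
    rintro s (hs | hs) t hadj
    · have : (t : V) ∈ G.neighborSet u := by rw [← hs]; exact hadj
      rw [hnbr] at this
      rcases this with h | h
      · exact absurd h t.2
      · exact Or.inr h
    · have : (t : V) ∈ G.neighborSet w := by rw [← hs]; exact hadj
      rcases hNw this with h | h
      · exact Or.inl h
      · exact absurd h t.2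
  have hreach := (hrem v).preconnected ⟨u, huv⟩ ⟨z0, hz0v⟩
  have := confine hclosed hreach (Or.inl rfl)
  rcases this with h | h
  · exact hz0u h
  · exact hz0w h

lemma contract_two_neighbors (hcard : 3 < Fintype.card V) (hconn : G.Connected)
    (hrem : ∀ y : V, (G.induce {x | x ≠ y}).Connected)
    (hnbr : G.neighborSet u = {v, w}) (hvw : v ≠ w) :
    ∀ x : {y : V // y ≠ u}, ∃ a b : {y : V // y ≠ u},
      a ≠ b ∧ (contractEdge G v u).Adj x a ∧ (contractEdge G v u).Adj x b := by
  have hadj_uv : G.Adj u v := adj_uv hnbr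
  have hadj_uw : G.Adj u w := adj_uw hnbr
  have hvu : v ≠ u := hadj_uv.ne'
  have hwu : w ≠ u := hadj_uw.ne'
  intro x
  by_cases hxv : (x : V) = v
  · have hxeq : x = ⟨v, hvu⟩ := Subtype.ext hxv
    have hz : ∃ z, G.Adj v z ∧ z ≠ u ∧ z ≠ w := by
      by_contra h
      push_neg at h
      refine nbhd_v_not_subset hcard hrem hnbr hadj_uv hadj_uw ?_
      intro t ht
      rcases (em (t = u)) with h1 | h1
      · exact Or.inl h1
      · exact Or.inr ((h t ht) h1)
    obtain ⟨z, hvz, hzu, hzw⟩ := hz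
    refine ⟨⟨w, hwu⟩, ⟨z, hzu⟩, fun h => hzw (congrArg Subtype.val h).symm, ?_, ?_⟩
    · rw [hxeq]
      exact contract_adj_v_of_adj_u hvu (by exact hvw.symm) hadj_uw
    · refine contract_adj_of_adj ?_
      show G.Adj (x : V) z
      rw [hxv]; exact hvz
  · by_cases hxw : (x : V) = w
    · have hz : ∃ z, G.Adj w z ∧ z ≠ u ∧ z ≠ v := by
        by_contra h
        push_neg at h
        refine nbhd_w_not_subset hcard hrem hnbr hadj_uv hadj_uw ?_
        intro t ht
        rcases (em (t = u)) with h1 | h1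
        · exact Or.inl h1
        · exact Or.inr ((h t ht) h1)
      obtain ⟨z, hwz, hzu, hzv⟩ := hz
      refine ⟨⟨v, hvu⟩, ⟨z, hzu⟩, fun h => hzv (congrArg Subtype.val h).symm, ?_, ?_⟩
      · refine ((contract_adj_v_of_adj_u hvu (by exact hxv) ?_)).symm
        show G.Adj u (x : V)
        rw [hxw]; exact hadj_uw
      · refine contract_adj_of_adj ?_
        show G.Adj (x : V) z
        rw [hxw]; exact hwz
    · obtain ⟨y, z, hyz, hxy, hxz⟩ := min_degree_two hconn hrem (by omega) (x : V)
      have hyu : y ≠ u := by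
        intro h
        have : (x : V) ∈ G.neighborSet u := (h ▸ hxy).symm
        rw [hnbr] at this
        rcases this with h1 | h1
        · exact hxv h1
        · exact hxw h1
      have hzu : z ≠ u := by
        intro h
        have : (x : V) ∈ G.neighborSet u := (h ▸ hxz).symm
        rw [hnbr] at this
        rcases this with h1 | h1
        · exact hxv h1
        · exact hxw h1
      exact ⟨⟨y, hyu⟩, ⟨z, hzu⟩, fun h => hyz (congrArg Subtype.val h),
        contract_adj_of_adj hxy, contract_adj_of_adj hxz⟩

end Main2

end TWAux

/-- Suppressing a degree-2 vertex `u` (contracting the edge `{u, v}` to one of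
its two neighbors) in a 2-connected graph on more than 3 vertices preserves
treewidth. -/
theorem treewidth_suppress_degree_two {V : Type} [Fintype V] [DecidableEq V]
    (G : SimpleGraph V) (u v w : V)
    (h2c : IsTwoConnected G) (hcard : 3 < Fintype.card V)
    (hvw : v ≠ w) (hnbr : G.neighborSet u = {v, w}) :
    treewidth (contractEdge G v u) = treewidth G := by
  classical
  obtain ⟨hconn, hcard3, hrem⟩ := h2c
  have hadj_uv : G.Adj u v := TWAux.adj_uv hnbr
  have hadj_uw : G.Adj u w := TWAux.adj_uw hnbr
  have hvu : v ≠ u := hadj_uv.ne'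
  have hwu : w ≠ u := hadj_uw.ne'
  haveI : Nonempty V := ⟨u⟩
  haveI : Nonempty {x : V // x ≠ u} := ⟨⟨v, hvu⟩⟩
  have hsetG : {n | ∃ D : TreeDecomp G, ∀ i, (D.bag i).card ≤ n + 1}.Nonempty :=
    TWAux.treewidth_set_nonempty G
  have hsetG' : {n | ∃ D : TreeDecomp (contractEdge G v u),
      ∀ i, (D.bag i).card ≤ n + 1}.Nonempty := TWAux.treewidth_set_nonempty _
  have h1 : treewidth (contractEdge G v u) ≤ treewidth G := by
    obtain ⟨D, hD⟩ := Nat.sInf_mem hsetG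
    apply Nat.sInf_le
    exact ⟨TWAux.contractDecomp hvu hadj_uv D,
      fun i => le_trans Finset.card_image_le (hD i)⟩
  obtain ⟨D', hD'0⟩ := Nat.sInf_mem hsetG'
  have hD' : ∀ i, (D'.bag i).card ≤ treewidth (contractEdge G v u) + 1 := hD'0
  have hG'conn : (contractEdge G v u).Connected := TWAux.contract_connected hvu hconn
  have h3 : 2 ≤ treewidth (contractEdge G v u) := by
    by_contra h
    push_neg at h
    have hbags : ∀ i, (D'.bag i).card ≤ 2 := fun i => le_trans (hD' i) (by omega)
    have hdeg := TWAux.contract_two_neighbors hcard hconn hrem hnbr hvw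
    have hnacyc := TWAux.not_isAcyclic hG'conn hdeg
    rw [SimpleGraph.IsAcyclic] at hnacyc
    push_neg at hnacyc
    obtain ⟨x, c, hc⟩ := hnacyc
    obtain ⟨i, hi⟩ := TWAux.bag_three_of_cycle D' c hc
    have := hbags i
    omega
  have h2 : treewidth G ≤ treewidth (contractEdge G v u) := by
    have hvwadj : (contractEdge G v u).Adj ⟨v, hvu⟩ ⟨w, hwu⟩ :=
      TWAux.contract_adj_v_of_adj_u hvu (by exact hvw.symm) hadj_uw
    obtain ⟨i0, hvi0, hwi0⟩ := D'.edge_bag _ _ hvwadj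
    apply Nat.sInf_le
    refine ⟨TWAux.extendDecomp D' hvu hwu hnbr i0 hvi0 hwi0, ?_⟩
    intro o
    cases o with
    | none =>
      show ({u, v, w} : Finset V).card ≤ _
      have hle : ({u, v, w} : Finset V).card ≤ 3 :=
        le_trans (Finset.card_insert_le _ _) (by
          have := Finset.card_insert_le v ({w} : Finset V)
          simp only [Finset.card_singleton] at this ⊢
          omega)
      omega
    | some i =>
      show ((D'.bag i).image Subtype.val).card ≤ _
      exact le_trans Finset.card_image_le (hD' i)
  exact le_antisymm h1 h2
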